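/- The von Neumann entropy of the isotropic state, S(F,d) = −F·log F − (1−F)·log((1−F)/(d²−1)) (with the convention 0·log 0 = 0), satisfies the lower bound S(F,d) ≥ (1−F)·(2·log d − 1/(d²−1)) for every integer d ≥ 2 and every F ∈ [0,1]. -/

import Mathlib

/-- The von Neumann entropy of the isotropic state
`S(F,d) = −F·log F − (1−F)·log((1−F)/(d²−1))` (with the convention `0·log 0 = 0`,
which is automatic since `Real.log 0 = 0`) satisfies the lower bound
`S(F,d) ≥ (1−F)·(2·log d − 1/(d²−1))`. -/
theorem isoState_entropy_lower_bound (d : ℕ) (hd : 2 ≤ d) (F : ℝ)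
    (hF : F ∈ Set.Icc (0 : ℝ) 1) :
    (1 - F) * (2 * Real.log d - 1 / ((d : ℝ) ^ 2 - 1)) ≤
      -F * Real.log F - (1 - F) * Real.log ((1 - F) / ((d : ℝ) ^ 2 - 1)) := by
  have hd' : (2:ℝ) ≤ (d:ℝ) := by exact_mod_cast hd
  have hDpos : (0:ℝ) < (d : ℝ) ^ 2 - 1 := by nlinarith
  obtain ⟨hF0, hF1⟩ := hF
  rcases eq_or_lt_of_le hF1 with h1 | h1
  · subst h1
    simp
  · have h1F : (0:ℝ) < 1 - F := by linarith
    rw [Real.log_div (ne_of_gt h1F) (ne_of_gt hDpos)]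
    have e1 : 0 ≤ -F * Real.log F :=
      by nlinarith [Real.log_nonpos hF0 hF1]
    have e2 : (1 - F) * Real.log (1 - F) ≤ 0 :=
      mul_nonpos_of_nonneg_of_nonpos (le_of_lt h1F)
        (Real.log_nonpos (le_of_lt h1F) (by linarith))
    have e3 : 2 * Real.log d - 1 / ((d : ℝ) ^ 2 - 1) ≤ Real.log ((d : ℝ) ^ 2 - 1) := by
      have hx : (0:ℝ) < (d : ℝ) ^ 2 / ((d : ℝ) ^ 2 - 1) := by positivity
      have h := Real.log_le_sub_one_of_pos hx
      rw [Real.log_div (by positivity) (ne_of_gt hDpos)] at h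
      have hlp : Real.log ((d : ℝ) ^ 2) = 2 * Real.log d := by
        rw [Real.log_pow]; push_cast; ring
      rw [hlp] at h
      have : (d : ℝ) ^ 2 / ((d : ℝ) ^ 2 - 1) - 1 = 1 / ((d : ℝ) ^ 2 - 1) := by
        field_simp
        ring
      linarith [this ▸ h]
    nlinarith [mul_le_mul_of_nonneg_left e3 (le_of_lt h1F)]
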